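/- Let d ≥ 1 and n ≥ 3. There exists an injective family p : Fin n → EuclideanSpace ℝ (Fin d) of n points such that every angle ∠(p i, p j, p k) over pairwise distinct indices i, j, k is at least π / 3 (equivalently, whose minimum angle equals π / 3) if and only if n ≤ d + 1. -/

import Mathlib

open Real EuclideanGeometry

section Aux

variable {V : Type*} [NormedAddCommGroup V] [InnerProductSpace ℝ V]

/-- In an equilateral triangle with positive side length, each angle is `π / 3`. -/
lemma aux_angle_eq_pi_div_three {a b c : V} {r : ℝ} (hr : r ≠ 0)
    (h1 : dist a b = r) (h2 : dist b c = r) (h3 : dist a c = r) :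
    ∠ a b c = π / 3 := by
  have law := EuclideanGeometry.law_cos a b c
  rw [dist_comm c b, h1, h2, h3] at law
  have hrr : r * r ≠ 0 := mul_ne_zero hr hr
  have key : (2 * Real.cos (∠ a b c) - 1) * (r * r) = 0 := by linear_combination law
  have hcos : Real.cos (∠ a b c) = 1 / 2 := by
    have := (mul_eq_zero.1 key).resolve_right hrr
    linarith
  have hmem : ∠ a b c ∈ Set.Icc 0 π :=
    ⟨EuclideanGeometry.angle_nonneg a b c, EuclideanGeometry.angle_le_pi a b c⟩
  have hmem' : π / 3 ∈ Set.Icc (0:ℝ) π := ⟨by positivity, by linarith [Real.pi_pos]⟩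
  exact Real.injOn_cos hmem hmem' (by rw [hcos, Real.cos_pi_div_three])

end Aux

/-- There exist `m+1` points in `ℝ^d` (for `1 ≤ m ≤ d`) that are pairwise at distance `√2`. -/
lemma aux_exists_equidistant (d m : ℕ) (hm : 1 ≤ m) (hmd : m ≤ d) :
    ∃ p : Fin (m+1) → EuclideanSpace ℝ (Fin d),
      ∀ i j, i ≠ j → dist (p i) (p j) = Real.sqrt 2 := by
  set e : Fin m → EuclideanSpace ℝ (Fin d) :=
    fun i => EuclideanSpace.single (Fin.castLE hmd i) 1 with he
  have horth : Orthonormal ℝ e :=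
    (EuclideanSpace.orthonormal_single (𝕜 := ℝ) (ι := Fin d)).comp _ (Fin.castLE_injective hmd)
  have hie : ∀ i j, (inner ℝ (e i) (e j) : ℝ) = if i = j then 1 else 0 :=
    orthonormal_iff_ite.mp horth
  have hnorm : ∀ i, ‖e i‖ = 1 := fun i => horth.1 i
  set t : ℝ := (1 + Real.sqrt (m+1)) / m with ht
  have hmpos : (0:ℝ) < m := by exact_mod_cast hm
  have hsq : Real.sqrt (m+1) ^ 2 = m + 1 := Real.sq_sqrt (by positivity)
  have hteq : (m:ℝ) * t ^ 2 = 2 * t + 1 := by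
    rw [ht]
    field_simp
    nlinarith [hsq]
  set s : EuclideanSpace ℝ (Fin d) := ∑ k, e k with hs
  have hinner_es : ∀ i, (inner ℝ (e i) s : ℝ) = 1 := by
    intro i
    rw [hs, inner_sum]
    simp [hie]
  have hnorm_s : ‖s‖ ^ 2 = m := by
    rw [← real_inner_self_eq_norm_sq, hs, inner_sum]
    have : ∀ k : Fin m, (inner ℝ (∑ j, e j) (e k) : ℝ) = 1 := by
      intro k
      rw [sum_inner]
      simp [hie]
    rw [Finset.sum_congr rfl (fun k _ => this k)]
    simp
  have hts : ‖t • s‖ ^ 2 = t ^ 2 * ‖s‖ ^ 2 := by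
    rw [norm_smul, mul_pow, Real.norm_eq_abs, sq_abs]
  refine ⟨fun i => if h : (i : ℕ) < m then e ⟨i, h⟩ else t • s, ?_⟩
  have key : ∀ x y : EuclideanSpace ℝ (Fin d), ‖x - y‖ ^ 2 = 2 → dist x y = Real.sqrt 2 := by
    intro x y h
    rw [dist_eq_norm, ← Real.sqrt_sq (norm_nonneg (x - y)), h]
  intro i j hij
  by_cases hi : (i : ℕ) < m <;> by_cases hj : (j : ℕ) < m <;>
    simp only [hi, hj, dite_true, dite_false, dif_pos, dif_neg, not_false_iff]
  · apply key
    have hne : (⟨(i:ℕ), hi⟩ : Fin m) ≠ ⟨(j:ℕ), hj⟩ := by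
      simp only [ne_eq, Fin.mk.injEq]
      exact fun h => hij (Fin.ext h)
    rw [norm_sub_sq_real, hnorm, hnorm, hie]
    simp only [hne, if_neg, ite_false]
    norm_num
  · apply key
    rw [norm_sub_sq_real, hnorm, real_inner_smul_right, hinner_es, hts, hnorm_s]
    nlinarith [hteq]
  · apply key
    rw [norm_sub_sq_real, hnorm, hts, hnorm_s, real_inner_smul_left, real_inner_comm,
      hinner_es]
    nlinarith [hteq]
  · exfalso
    have h1 : (i:ℕ) = (j:ℕ) := by omega
    exact hij (Fin.ext h1)

theorem exists_config_angles_ge_pi_div_three_iff (d n : ℕ) (hd : 1 ≤ d) (hn : 3 ≤ n) :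
    (∃ p : Fin n → EuclideanSpace ℝ (Fin d), Function.Injective p ∧
      ∀ i j k : Fin n, i ≠ j → j ≠ k → i ≠ k → π / 3 ≤ ∠ (p i) (p j) (p k)) ↔
    n ≤ d + 1 := by
  obtain ⟨m, rfl⟩ : ∃ m, n = m + 3 := ⟨n - 3, by omega⟩
  constructor
  · rintro ⟨p, hinj, hang⟩
    -- every angle is exactly π/3
    have hangeq : ∀ i j k : Fin (m+3), i ≠ j → j ≠ k → i ≠ k →
        ∠ (p i) (p j) (p k) = π / 3 := by
      intro i j k hij hjk hik
      have hsum := EuclideanGeometry.angle_add_angle_add_angle_eq_pi (p₁ := p i) (p₂ := p j)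
        (p₃ := p k) (fun h => hij (hinj h).symm)
      have h1 := hang i j k hij hjk hik
      have h2 := hang j k i hjk hik.symm hij.symm
      have h3 := hang k i j hik.symm hij hjk.symm
      linarith
    -- all pairwise distances are equal
    have hppi : π / 3 ≠ π := by
      intro h; have := Real.pi_pos; linarith [h]
    have hshare : ∀ i j k : Fin (m+3), i ≠ j → j ≠ k → i ≠ k →
        dist (p i) (p j) = dist (p i) (p k) := by
      intro i j k hij hjk hik
      apply EuclideanGeometry.dist_eq_of_angle_eq_angle_of_angle_ne_pi
      · rw [hangeq i j k hij hjk hik, hangeq i k j hik hjk.symm hij]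
      · rw [hangeq j i k hij.symm hik hjk]; exact hppi
    have h01 : (0 : Fin (m+3)) ≠ 1 := by
      intro h; exact absurd (congrArg Fin.val h) (by simp)
    set r : ℝ := dist (p 0) (p 1) with hr
    have hrpos : 0 < r := dist_pos.2 (fun h => h01 (hinj h))
    have hdist : ∀ a b : Fin (m+3), a ≠ b → dist (p a) (p b) = r := by
      have h0 : ∀ b : Fin (m+3), b ≠ 0 → dist (p 0) (p b) = r := by
        intro b hb
        by_cases hb1 : b = 1
        · rw [hb1]
        · exact (hshare 0 1 b h01 (Ne.symm hb1) (Ne.symm hb)).symm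
      intro a b hab
      by_cases ha : a = 0
      · exact ha ▸ h0 b (ha ▸ hab).symm
      · by_cases hb : b = 0
        · rw [hb, dist_comm]; exact h0 a ha
        · rw [← hshare a 0 b ha (fun h => hb h.symm) hab, dist_comm]
          exact h0 a ha
    -- linear independence of the difference vectors
    set v : Fin (m+2) → EuclideanSpace ℝ (Fin d) := fun i => p i.succ - p 0 with hv
    have hvnorm : ∀ i, ‖v i‖ = r := by
      intro i
      rw [hv]
      simp only
      rw [← dist_eq_norm]
      exact hdist i.succ 0 (Fin.succ_ne_zero i)
    have hvself : ∀ i, (inner ℝ (v i) (v i) : ℝ) = r * r := by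
      intro i; rw [real_inner_self_eq_norm_mul_norm, hvnorm]
    have hvinner : ∀ i j, i ≠ j → (inner ℝ (v i) (v j) : ℝ) = r * r / 2 := by
      intro i j hij
      rw [real_inner_eq_norm_mul_self_add_norm_mul_self_sub_norm_sub_mul_self_div_two,
        hvnorm, hvnorm]
      have hsub : v i - v j = p i.succ - p j.succ := by rw [hv]; simp only; abel
      have hsub2 : ‖v i - v j‖ = r := by
        rw [hsub, ← dist_eq_norm]
        exact hdist i.succ j.succ (fun h => hij (Fin.succ_injective _ h))
      rw [hsub2]; ring
    have hli : LinearIndependent ℝ v := by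
      rw [Fintype.linearIndependent_iff]
      intro g hg
      have heq : ∀ j : Fin (m+2), (∑ i, g i) * (r * r / 2) + g j * (r * r / 2) = 0 := by
        intro j
        have hz : (∑ i, g i * (inner ℝ (v i) (v j) : ℝ)) = 0 := by
          have h0 : (inner ℝ (∑ i, g i • v i) (v j) : ℝ) = 0 := by rw [hg, inner_zero_left]
          rw [sum_inner] at h0
          simpa only [real_inner_smul_left] using h0
        have hc : ∀ i, (inner ℝ (v i) (v j) : ℝ)
            = r * r / 2 + (if i = j then r * r / 2 else 0) := by
          intro i
          by_cases h : i = j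
          · subst h; rw [hvself, if_pos rfl]; ring
          · rw [hvinner i j h, if_neg h]; ring
        calc (∑ i, g i) * (r * r / 2) + g j * (r * r / 2)
            = ∑ i, g i * (inner ℝ (v i) (v j) : ℝ) := by
              have hterm : ∀ i, g i * (inner ℝ (v i) (v j) : ℝ)
                  = g i * (r * r / 2) + (if i = j then g i * (r * r / 2) else 0) := by
                intro i
                rw [hc i]
                by_cases h : i = j
                · rw [if_pos h, if_pos h]; ring
                · rw [if_neg h, if_neg h]; ring
              rw [Finset.sum_congr rfl (fun i _ => hterm i), Finset.sum_add_distrib,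
                ← Finset.sum_mul, Finset.sum_ite_eq' Finset.univ j
                (fun i => g i * (r * r / 2))]
              simp
          _ = 0 := hz
      have hrr : r * r / 2 ≠ 0 := by positivity
      have hgj : ∀ j : Fin (m+2), g j = -(∑ i, g i) := by
        intro j
        have h1 := heq j
        have h2 : ((∑ i, g i) + g j) * (r * r / 2) = 0 := by linarith [h1]
        have h3 := (mul_eq_zero.1 h2).resolve_right hrr
        linarith
      have hS : (∑ i, g i) = 0 := by
        have h4 : (∑ i, g i) = ∑ _i : Fin (m+2), -(∑ i, g i) :=
          Finset.sum_congr rfl (fun i _ => hgj i)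
        rw [Finset.sum_const, Finset.card_univ, Fintype.card_fin, nsmul_eq_mul] at h4
        have hm2 : (0:ℝ) ≤ (m+2 : ℕ) := by positivity
        nlinarith [h4]
      intro j
      rw [hgj j, hS, neg_zero]
    have hcard := hli.fintype_card_le_finrank
    rw [Fintype.card_fin, finrank_euclideanSpace_fin] at hcard
    omega
  · intro hle
    obtain ⟨p, hp⟩ := aux_exists_equidistant d (m+2) (by omega) (by omega)
    have hs2 : Real.sqrt 2 ≠ 0 := by positivity
    refine ⟨p, ?_, ?_⟩
    · intro a b hab
      by_contra h
      exact hs2 (by rw [← hp a b h]; simp [hab])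
    · intro i j k hij hjk hik
      rw [aux_angle_eq_pi_div_three hs2 (by rw [dist_comm]; exact hp j i (Ne.symm hij))
        (hp j k hjk) (hp i k hik)]
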